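/- Let N ≥ 2 and α, β > 0 with αβ = N². Define T₁(v)(t) = ∫_t^1 (∫_0^s N τ^{N-1} v(τ)^α dτ)^{1/N} ds, T₂ analogously with exponent β, T = T₁ ∘ T₂, and let K = {v ∈ C[0,1] : v ≥ 0, min_{[1/4,3/4]} v ≥ (1/4)‖v‖}. Then T has no fixed point v ∈ K with v ≠ 0. Hence, the radial Monge-Ampère system det D²u₁ = (−u₂)^α, det D²u₂ = (−u₁)^β on the unit ball B ⊂ ℝ^N with u₁ = u₂ = 0 on ∂B and u₁, u₂ < 0 in B admits no radial convex solution. -/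

import Mathlib

open Set MeasureTheory intervalIntegral

/-- Supremum norm on `C[0,1]`. -/
noncomputable def supNorm (v : ℝ → ℝ) : ℝ :=
  sSup ((fun t => |v t|) '' Icc (0:ℝ) 1)

/-- Membership in the cone `K ⊂ C[0,1]`. -/
def memK (v : ℝ → ℝ) : Prop :=
  ContinuousOn v (Icc (0:ℝ) 1) ∧ (∀ t ∈ Icc (0:ℝ) 1, 0 ≤ v t) ∧
    ∀ t ∈ Icc (1/4 : ℝ) (3/4), (1/4) * supNorm v ≤ v t

/-- The solution operator with exponent `γ`. -/
noncomputable def MAop (N : ℕ) (γ : ℝ) (v : ℝ → ℝ) : ℝ → ℝ :=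
  fun t => ∫ s in t..(1:ℝ),
    (∫ τ in (0:ℝ)..s, (N:ℝ) * τ ^ (N - 1) * v τ ^ γ) ^ ((N:ℝ)⁻¹)

/-- Determinant of the Hessian matrix of `u` at `x`. -/
noncomputable def hessDet {n : ℕ} (u : EuclideanSpace ℝ (Fin n) → ℝ)
    (x : EuclideanSpace ℝ (Fin n)) : ℝ :=
  (Matrix.of fun i j : Fin n =>
    iteratedFDeriv ℝ 2 u x ![EuclideanSpace.single i (1:ℝ), EuclideanSpace.single j (1:ℝ)]).det

lemma MAop_bound (N : ℕ) (γ M : ℝ) (hN : 1 ≤ N) (hγ : 0 < γ) (hM : 0 ≤ M)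
    (f : ℝ → ℝ) (hf : ∀ τ ∈ Icc (0:ℝ) 1, 0 ≤ f τ ∧ f τ ≤ M) :
    ∀ t ∈ Icc (0:ℝ) 1, 0 ≤ MAop N γ f t ∧
      MAop N γ f t ≤ (1/2) * M ^ (γ * (N:ℝ)⁻¹) := by
  intro t ht
  have hNR : (0:ℝ) < N := by exact_mod_cast Nat.lt_of_lt_of_le Nat.zero_lt_one hN
  have hNne : N ≠ 0 := by omega
  have hMγ : (0:ℝ) ≤ M ^ (γ * (N:ℝ)⁻¹) := Real.rpow_nonneg hM _
  -- inner integral bounds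
  have hinner : ∀ s ∈ Icc t 1, (0:ℝ) ≤ (∫ τ in (0:ℝ)..s, (N:ℝ) * τ ^ (N - 1) * f τ ^ γ) ∧
      ((∫ τ in (0:ℝ)..s, (N:ℝ) * τ ^ (N - 1) * f τ ^ γ) ^ ((N:ℝ)⁻¹))
        ≤ s * M ^ (γ * (N:ℝ)⁻¹) := by
    intro s hs
    have hs0 : (0:ℝ) ≤ s := le_trans ht.1 hs.1
    have hs1 : s ≤ 1 := hs.2
    have hnn : (0:ℝ) ≤ ∫ τ in (0:ℝ)..s, (N:ℝ) * τ ^ (N - 1) * f τ ^ γ := by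
      apply intervalIntegral.integral_nonneg hs0
      intro τ hτ
      have hτ' : τ ∈ Icc (0:ℝ) 1 := ⟨hτ.1, le_trans hτ.2 hs1⟩
      have h1 := (hf τ hτ').1
      have hτ0 : (0:ℝ) ≤ τ := hτ.1
      exact mul_nonneg (mul_nonneg (by positivity) (pow_nonneg hτ0 _))
        (Real.rpow_nonneg h1 _)
    refine ⟨hnn, ?_⟩
    have hRHS : (∫ τ in (0:ℝ)..s, (N:ℝ) * τ ^ (N - 1) * M ^ γ) = s ^ N * M ^ γ := by
      obtain ⟨n, rfl⟩ : ∃ n, N = n + 1 := ⟨N - 1, by omega⟩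
      have : (∫ τ in (0:ℝ)..s, ((n+1:ℕ):ℝ) * τ ^ (n + 1 - 1) * M ^ γ)
          = (((n+1:ℕ):ℝ) * M ^ γ) * ∫ τ in (0:ℝ)..s, τ ^ n := by
        rw [← intervalIntegral.integral_const_mul]
        apply intervalIntegral.integral_congr
        intro τ _
        simp only [Nat.add_sub_cancel]
        ring
      rw [this, integral_pow]
      have h0 : (0:ℝ) ^ (n+1) = 0 := zero_pow (by omega)
      rw [h0]
      push_cast
      have hne : ((n:ℝ) + 1) ≠ 0 := by positivity
      field_simp
      ring
    have hIle : (∫ τ in (0:ℝ)..s, (N:ℝ) * τ ^ (N - 1) * f τ ^ γ) ≤ s ^ N * M ^ γ := by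
      by_cases hint : IntervalIntegrable (fun τ => (N:ℝ) * τ ^ (N - 1) * f τ ^ γ)
          volume 0 s
      · rw [← hRHS]
        apply intervalIntegral.integral_mono_on hs0 hint
        · exact (Continuous.intervalIntegrable (by continuity) 0 s)
        · intro τ hτ
          have hτ' : τ ∈ Icc (0:ℝ) 1 := ⟨hτ.1, le_trans hτ.2 hs1⟩
          have h1 := (hf τ hτ').1
          have h2 := (hf τ hτ').2
          have : f τ ^ γ ≤ M ^ γ := Real.rpow_le_rpow h1 h2 hγ.le
          have hτn : (0:ℝ) ≤ (N:ℝ) * τ ^ (N-1) :=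
            mul_nonneg (by positivity) (pow_nonneg hτ.1 _)
          exact mul_le_mul_of_nonneg_left this hτn
      · rw [intervalIntegral.integral_undef hint]
        positivity
    calc (∫ τ in (0:ℝ)..s, (N:ℝ) * τ ^ (N - 1) * f τ ^ γ) ^ ((N:ℝ)⁻¹)
        ≤ (s ^ N * M ^ γ) ^ ((N:ℝ)⁻¹) := by
          apply Real.rpow_le_rpow hnn hIle (by positivity)
      _ = s * M ^ (γ * (N:ℝ)⁻¹) := by
          rw [Real.mul_rpow (pow_nonneg hs0 _) (Real.rpow_nonneg hM _),
            Real.pow_rpow_inv_natCast hs0 hNne, ← Real.rpow_mul hM]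
  constructor
  · apply intervalIntegral.integral_nonneg ht.2
    intro s hs
    exact Real.rpow_nonneg (hinner s hs).1 _
  · by_cases hint : IntervalIntegrable
        (fun s => (∫ τ in (0:ℝ)..s, (N:ℝ) * τ ^ (N - 1) * f τ ^ γ) ^ ((N:ℝ)⁻¹)) volume t 1
    · have h1 : MAop N γ f t ≤ ∫ s in t..(1:ℝ), s * M ^ (γ * (N:ℝ)⁻¹) := by
        apply intervalIntegral.integral_mono_on ht.2 hint
        · exact (Continuous.intervalIntegrable (by continuity) t 1)
        · intro s hs; exact (hinner s hs).2
      have h2 : (∫ s in t..(1:ℝ), s * M ^ (γ * (N:ℝ)⁻¹))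
          = (1 - t^2)/2 * M ^ (γ * (N:ℝ)⁻¹) := by
        rw [intervalIntegral.integral_mul_const, integral_id]
        ring
      refine le_trans h1 ?_
      rw [h2]
      apply mul_le_mul_of_nonneg_right _ hMγ
      nlinarith [ht.1, sq_nonneg t]
    · rw [MAop, intervalIntegral.integral_undef hint]
      positivity

lemma partA (N : ℕ) (hN : 2 ≤ N) (α β : ℝ) (hα : 0 < α) (hβ : 0 < β)
    (hαβ : α * β = (N:ℝ) ^ 2) (v : ℝ → ℝ) (hvc : ContinuousOn v (Icc 0 1))
    (hv0 : ∀ t ∈ Icc (0:ℝ) 1, 0 ≤ v t) (hne : ∃ t ∈ Icc (0:ℝ) 1, v t ≠ 0)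
    (hfix : ∀ t ∈ Icc (0:ℝ) 1, MAop N α (MAop N β v) t = v t) : False := by
  have hN1 : 1 ≤ N := by omega
  have hNne : (N:ℝ) ≠ 0 := by positivity
  set M := supNorm v with hMdef
  have himg : ((fun t => |v t|) '' Icc (0:ℝ) 1).Nonempty :=
    ⟨|v 0|, mem_image_of_mem _ (by norm_num)⟩
  have hbdd : BddAbove ((fun t => |v t|) '' Icc (0:ℝ) 1) :=
    (isCompact_Icc.image_of_continuousOn hvc.abs).bddAbove
  have hMub : ∀ t ∈ Icc (0:ℝ) 1, v t ≤ M := by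
    intro t ht
    have : |v t| ≤ M := le_csSup hbdd (mem_image_of_mem _ ht)
    exact (le_abs_self _).trans this
  have hMpos : 0 < M := by
    obtain ⟨t₀, ht₀, hvt₀⟩ := hne
    have h1 : 0 < v t₀ := lt_of_le_of_ne (hv0 t₀ ht₀) (Ne.symm hvt₀)
    calc (0:ℝ) < v t₀ := h1
      _ ≤ M := hMub t₀ ht₀
  -- bound for w = MAop N β v
  have hw := MAop_bound N β M hN1 hβ hMpos.le v (fun τ hτ => ⟨hv0 τ hτ, hMub τ hτ⟩)
  set M₂ := (1/2) * M ^ (β * (N:ℝ)⁻¹) with hM₂def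
  have hM₂ : 0 ≤ M₂ := by positivity
  have hv := MAop_bound N α M₂ hN1 hα hM₂ (MAop N β v)
    (fun τ hτ => ⟨(hw τ hτ).1, (hw τ hτ).2⟩)
  have hvle : ∀ t ∈ Icc (0:ℝ) 1, v t ≤ (1/2) * M₂ ^ (α * (N:ℝ)⁻¹) := by
    intro t ht
    rw [← hfix t ht]
    exact (hv t ht).2
  have hMle : M ≤ (1/2) * M₂ ^ (α * (N:ℝ)⁻¹) := by
    apply csSup_le himg
    rintro y ⟨t, ht, rfl⟩
    show |v t| ≤ _
    rw [abs_of_nonneg (hv0 t ht)]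
    exact hvle t ht
  -- compute: M₂ ^ (α/N) = (1/2)^(α/N) * M
  have hexp : (β * (N:ℝ)⁻¹) * (α * (N:ℝ)⁻¹) = 1 := by
    field_simp
    nlinarith [hαβ]
  have hM₂pow : M₂ ^ (α * (N:ℝ)⁻¹) = (1/2:ℝ) ^ (α * (N:ℝ)⁻¹) * M := by
    rw [hM₂def, Real.mul_rpow (by norm_num) (Real.rpow_nonneg hMpos.le _),
      ← Real.rpow_mul hMpos.le, hexp, Real.rpow_one]
  have hlt : (1/2:ℝ) * ((1/2:ℝ) ^ (α * (N:ℝ)⁻¹)) < 1 := by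
    have h1 : (1/2:ℝ) ^ (α * (N:ℝ)⁻¹) < 1 := by
      apply Real.rpow_lt_one (by norm_num) (by norm_num)
      positivity
    nlinarith [Real.rpow_nonneg (show (0:ℝ) ≤ 1/2 by norm_num) (α * (N:ℝ)⁻¹)]
  have : M < M := by
    calc M ≤ (1/2) * M₂ ^ (α * (N:ℝ)⁻¹) := hMle
      _ = (1/2) * ((1/2:ℝ) ^ (α * (N:ℝ)⁻¹)) * M := by rw [hM₂pow]; ring
      _ < 1 * M := by
        apply mul_lt_mul_of_pos_right hlt hMpos
      _ = M := one_mul M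
  exact lt_irrefl M this

lemma hasFDerivAt_norm_ne_zero {E : Type*} [NormedAddCommGroup E] [InnerProductSpace ℝ E]
    {x : E} (hx : x ≠ 0) :
    HasFDerivAt (fun y : E => ‖y‖) (‖x‖⁻¹ • innerSL ℝ x) x := by
  have h1 : HasFDerivAt (fun y : E => ‖y‖ ^ 2) ((2:ℕ) • innerSL ℝ x) x :=
    (hasStrictFDerivAt_norm_sq x).hasFDerivAt
  have hx2 : ‖x‖ ^ 2 ≠ 0 := pow_ne_zero _ (norm_ne_zero_iff.2 hx)
  have h2 : HasDerivAt Real.sqrt (1 / (2 * Real.sqrt (‖x‖ ^ 2))) (‖x‖ ^ 2) :=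
    Real.hasDerivAt_sqrt hx2
  have h3 := h2.comp_hasFDerivAt x h1
  have h4 : (Real.sqrt ∘ fun y : E => ‖y‖ ^ 2) = fun y : E => ‖y‖ :=
    funext fun y => Real.sqrt_sq (norm_nonneg y)
  rw [h4] at h3
  refine h3.congr_fderiv ?_
  symm
  ext y
  have hnx : ‖x‖ ≠ 0 := norm_ne_zero_iff.2 hx
  rw [Real.sqrt_sq (norm_nonneg x)]
  simp only [ContinuousLinearMap.coe_smul', Pi.smul_apply, ContinuousLinearMap.smul_apply,
    smul_eq_mul, nsmul_eq_mul, Nat.cast_ofNat]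
  field_simp

lemma radial_MAop (N : ℕ) (hN : 2 ≤ N) (γ : ℝ) (hγ : 0 < γ) (i0 : Fin N)
    (u w : EuclideanSpace ℝ (Fin N) → ℝ)
    (hu2 : ContDiffOn ℝ 2 u (Metric.ball 0 1))
    (huc : ContinuousOn u (Metric.closedBall 0 1))
    (hwc : ContinuousOn w (Metric.closedBall 0 1))
    (hrad : ∀ x y : EuclideanSpace ℝ (Fin N), ‖x‖ = ‖y‖ → u x = u y)
    (hconv : ConvexOn ℝ (Metric.closedBall 0 1) u)
    (hub : ∀ x ∈ Metric.sphere (0 : EuclideanSpace ℝ (Fin N)) 1, u x = 0)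
    (heq : ∀ x ∈ Metric.ball (0 : EuclideanSpace ℝ (Fin N)) 1,
      hessDet u x = (-w x) ^ γ) :
    ∀ t ∈ Icc (0:ℝ) 1,
      MAop N γ (fun τ => -w (τ • EuclideanSpace.single i0 (1:ℝ))) t
        = -u (t • EuclideanSpace.single i0 (1:ℝ)) := by
  have hNne : N ≠ 0 := by omega
  set e : EuclideanSpace ℝ (Fin N) := EuclideanSpace.single i0 (1:ℝ) with he_def
  have he : ‖e‖ = 1 := by simp [he_def]
  have hnsmul : ∀ r : ℝ, ‖r • e‖ = |r| := by
    intro r; rw [norm_smul, he, mul_one]; rfl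
  set φ : ℝ → ℝ := fun r => u (r • e) with hφ_def
  have hφnorm : ∀ z : EuclideanSpace ℝ (Fin N), u z = φ ‖z‖ := by
    intro z
    apply hrad
    rw [hnsmul, abs_of_nonneg (norm_nonneg z)]
  have hmemb : ∀ r : ℝ, |r| < 1 → r • e ∈ Metric.ball (0 : EuclideanSpace ℝ (Fin N)) 1 := by
    intro r hr; rw [mem_ball_zero_iff, hnsmul]; exact hr
  have hmemc : ∀ r : ℝ, |r| ≤ 1 → r • e ∈ Metric.closedBall (0 : EuclideanSpace ℝ (Fin N)) 1 := by
    intro r hr; rw [Metric.mem_closedBall, dist_zero_right, hnsmul]; exact hr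
  have hline : ContDiff ℝ 2 (fun r : ℝ => r • e) := contDiff_id.smul contDiff_const
  have hφ2 : ∀ r ∈ Ioo (-1:ℝ) 1, ContDiffAt ℝ 2 φ r := by
    intro r hr
    have hx : r • e ∈ Metric.ball (0 : EuclideanSpace ℝ (Fin N)) 1 :=
      hmemb r (abs_lt.2 ⟨hr.1, hr.2⟩)
    exact (hu2.contDiffAt (Metric.isOpen_ball.mem_nhds hx)).comp r hline.contDiffAt
  have hφOn : ContDiffOn ℝ 2 φ (Ioo (-1:ℝ) 1) := fun r hr => (hφ2 r hr).contDiffWithinAt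
  set g : ℝ → ℝ := deriv φ with hg_def
  have hφd : ∀ r ∈ Ioo (-1:ℝ) 1, HasDerivAt φ (g r) r := by
    intro r hr
    exact ((hφ2 r hr).differentiableAt (by norm_num)).hasDerivAt
  have hgOn : ContDiffOn ℝ 1 g (Ioo (-1:ℝ) 1) :=
    hφOn.deriv_of_isOpen isOpen_Ioo (by norm_num)
  have hgd : ∀ r ∈ Ioo (-1:ℝ) 1, HasDerivAt g (deriv g r) r := by
    intro r hr
    exact (((hgOn.differentiableOn (by norm_num)) r hr).differentiableAt
      (isOpen_Ioo.mem_nhds hr)).hasDerivAt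
  -- gradient formula
  have hgrad : ∀ y ∈ Metric.ball (0 : EuclideanSpace ℝ (Fin N)) 1, y ≠ 0 →
      HasFDerivAt u ((g ‖y‖ / ‖y‖) • innerSL ℝ y) y := by
    intro y hy hy0
    have hy1 : ‖y‖ ∈ Ioo (-1:ℝ) 1 :=
      ⟨lt_of_lt_of_le (by norm_num) (norm_nonneg y), mem_ball_zero_iff.1 hy⟩
    have hn := hasFDerivAt_norm_ne_zero hy0
    have h := (hφd _ hy1).comp_hasFDerivAt y hn
    have h2 : HasFDerivAt u (g ‖y‖ • (‖y‖⁻¹ • innerSL ℝ y)) y :=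
      h.congr_of_eventuallyEq (Filter.Eventually.of_forall fun z => hφnorm z)
    convert h2 using 1
    rw [smul_smul, div_eq_mul_inv]
  -- Hessian entries at x₀ = r • e, 0 < r < 1
  have hdet : ∀ r ∈ Ioo (0:ℝ) 1, hessDet u (r • e) = deriv g r * (g r / r) ^ (N - 1) := by
    intro r hr
    have hr0 : r ≠ 0 := ne_of_gt hr.1
    have hrIoo : r ∈ Ioo (-1:ℝ) 1 := ⟨lt_trans (by norm_num) hr.1, hr.2⟩
    set x₀ : EuclideanSpace ℝ (Fin N) := r • e with hx₀_def
    have hx₀ball : x₀ ∈ Metric.ball (0 : EuclideanSpace ℝ (Fin N)) 1 :=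
      hmemb r (abs_lt.2 ⟨hrIoo.1, hrIoo.2⟩)
    have hnx₀ : ‖x₀‖ = r := by rw [hx₀_def, hnsmul, abs_of_pos hr.1]
    have hx₀ne : x₀ ≠ 0 := by
      intro h; rw [h, norm_zero] at hnx₀; exact hr0 hnx₀.symm
    -- scalar radial factor
    set ψ : ℝ → ℝ := fun t => g t / t with hψ_def
    set ψ' : ℝ := (deriv g r * r - g r * 1) / r ^ 2 with hψ'_def
    have hψd : HasDerivAt ψ ψ' r := (hgd r hrIoo).div (hasDerivAt_id r) hr0
    set n₀ : EuclideanSpace ℝ (Fin N) →L[ℝ] ℝ := r⁻¹ • innerSL ℝ x₀ with hn₀_def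
    have hnorm_d : HasFDerivAt (fun y : EuclideanSpace ℝ (Fin N) => ‖y‖) n₀ x₀ := by
      have := hasFDerivAt_norm_ne_zero hx₀ne
      rwa [hnx₀] at this
    have hcd : HasFDerivAt (fun y : EuclideanSpace ℝ (Fin N) => ψ ‖y‖) (ψ' • n₀) x₀ := by
      have hψd' : HasDerivAt ψ ψ' ‖x₀‖ := by rwa [hnx₀]
      exact hψd'.comp_hasFDerivAt x₀ hnorm_d
    -- differentiability of fderiv u at x₀
    have hu2at : ContDiffAt ℝ 2 u x₀ := hu2.contDiffAt (Metric.isOpen_ball.mem_nhds hx₀ball)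
    have hF : DifferentiableAt ℝ (fderiv ℝ u) x₀ :=
      (hu2at.fderiv_right (m := 1) (by norm_num)).differentiableAt (by norm_num)
    have hs : (Metric.ball (0 : EuclideanSpace ℝ (Fin N)) 1 ∩ {(0:EuclideanSpace ℝ (Fin N))}ᶜ)
        ∈ nhds x₀ :=
      (Metric.isOpen_ball.inter isOpen_compl_singleton).mem_nhds ⟨hx₀ball, hx₀ne⟩
    -- entry computation
    have hHess : ∀ i j : Fin N,
        iteratedFDeriv ℝ 2 u x₀ ![EuclideanSpace.single i (1:ℝ), EuclideanSpace.single j (1:ℝ)]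
          = ψ r * (inner ℝ (EuclideanSpace.single j (1:ℝ)) (EuclideanSpace.single i (1:ℝ)) : ℝ)
            + (inner ℝ (EuclideanSpace.single j (1:ℝ)) x₀ : ℝ)
              * (ψ' * (r⁻¹ * (inner ℝ x₀ (EuclideanSpace.single i (1:ℝ)) : ℝ))) := by
      intro i j
      set Ei : EuclideanSpace ℝ (Fin N) := EuclideanSpace.single i (1:ℝ) with hEi_def
      set Ej : EuclideanSpace ℝ (Fin N) := EuclideanSpace.single j (1:ℝ) with hEj_def
      -- fun y => fderiv u y Ej has two derivative representations
      have hkj : HasFDerivAt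
          (fun y : EuclideanSpace ℝ (Fin N) => ψ ‖y‖ * (innerSL ℝ Ej) y)
          ((ψ ‖x₀‖) • innerSL ℝ Ej + ((innerSL ℝ Ej) x₀) • (ψ' • n₀)) x₀ :=
        hcd.mul (innerSL ℝ Ej).hasFDerivAt
      have heqj : (fun y : EuclideanSpace ℝ (Fin N) => fderiv ℝ u y Ej)
          =ᶠ[nhds x₀] (fun y => ψ ‖y‖ * (innerSL ℝ Ej) y) := by
        apply Filter.eventually_of_mem hs
        rintro y ⟨hy1, hy2⟩
        have := (hgrad y hy1 (by simpa using hy2)).fderiv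
        show (fderiv ℝ u y) Ej = ψ ‖y‖ * ((innerSL ℝ) Ej) y
        rw [this]
        simp only [ContinuousLinearMap.coe_smul', Pi.smul_apply, smul_eq_mul, innerSL_apply_apply]
        rw [real_inner_comm]
      have hj1 : HasFDerivAt (fun y : EuclideanSpace ℝ (Fin N) => fderiv ℝ u y Ej)
          ((ψ ‖x₀‖) • innerSL ℝ Ej + ((innerSL ℝ Ej) x₀) • (ψ' • n₀)) x₀ :=
        hkj.congr_of_eventuallyEq heqj
      have hj2 : HasFDerivAt (fun y : EuclideanSpace ℝ (Fin N) => fderiv ℝ u y Ej)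
          ((fderiv ℝ u x₀).comp (0 : EuclideanSpace ℝ (Fin N) →L[ℝ] EuclideanSpace ℝ (Fin N))
            + (fderiv ℝ (fderiv ℝ u) x₀).flip Ej) x₀ :=
        hF.hasFDerivAt.clm_apply (hasFDerivAt_const Ej x₀)
      have huniq := hj2.unique hj1
      have happ := congrArg (fun (L : EuclideanSpace ℝ (Fin N) →L[ℝ] ℝ) => L Ei) huniq
      simp only [ContinuousLinearMap.add_apply, ContinuousLinearMap.comp_apply,
        ContinuousLinearMap.zero_apply, map_zero, ContinuousLinearMap.flip_apply,
        ContinuousLinearMap.coe_smul', Pi.smul_apply, smul_eq_mul, innerSL_apply_apply,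
        zero_add] at happ
      rw [iteratedFDeriv_two_apply]
      simp only [Matrix.cons_val_zero, Matrix.cons_val_one, Matrix.head_cons]
      rw [happ, hnx₀]
      simp only [hn₀_def, ContinuousLinearMap.coe_smul', Pi.smul_apply, smul_eq_mul,
        innerSL_apply_apply]
    have hinner1 : ∀ i j : Fin N,
        (inner ℝ (EuclideanSpace.single j (1:ℝ)) (EuclideanSpace.single i (1:ℝ)) : ℝ)
          = if i = j then 1 else 0 := by
      intro i j
      rw [EuclideanSpace.inner_single_left]
      rcases eq_or_ne i j with rfl | h
      · simp
      · simp [EuclideanSpace.single_apply, h, Ne.symm h]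
    have hinner2 : ∀ j : Fin N, (inner ℝ (EuclideanSpace.single j (1:ℝ)) x₀ : ℝ)
        = if j = i0 then r else 0 := by
      intro j
      rw [hx₀_def, he_def, real_inner_smul_right, EuclideanSpace.inner_single_left]
      rcases eq_or_ne j i0 with rfl | h
      · simp
      · simp [EuclideanSpace.single_apply, h]
    have hinner3 : ∀ i : Fin N, (inner ℝ x₀ (EuclideanSpace.single i (1:ℝ)) : ℝ)
        = if i = i0 then r else 0 := by
      intro i; rw [real_inner_comm]; exact hinner2 i
    set d : Fin N → ℝ := fun i => if i = i0 then deriv g r else g r / r with hd_def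
    have hmat : (Matrix.of fun i j : Fin N => iteratedFDeriv ℝ 2 u x₀
        ![EuclideanSpace.single i (1:ℝ), EuclideanSpace.single j (1:ℝ)])
          = Matrix.diagonal d := by
      ext i j
      simp only [Matrix.of_apply]
      rw [hHess i j, hinner1 i j, hinner2 j, hinner3 i]
      rcases eq_or_ne i j with rfl | hij
      · rw [Matrix.diagonal_apply_eq]
        rcases eq_or_ne i i0 with rfl | hi0
        · simp only [hd_def, if_pos rfl, hψ_def, hψ'_def, if_true]
          field_simp
          ring
        · simp only [hd_def, if_neg hi0, hψ_def]
          simp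
      · rw [Matrix.diagonal_apply_ne _ hij]
        simp only [if_neg hij]
        rcases eq_or_ne j i0 with rfl | hj0
        · have hi0 : i ≠ j := hij
          simp [if_neg hi0]
        · simp [if_neg hj0]
    show (Matrix.of fun i j : Fin N => iteratedFDeriv ℝ 2 u x₀
        ![EuclideanSpace.single i (1:ℝ), EuclideanSpace.single j (1:ℝ)]).det
      = deriv g r * (g r / r) ^ (N - 1)
    rw [hmat, Matrix.det_diagonal]
    rw [← Finset.mul_prod_erase Finset.univ d (Finset.mem_univ i0)]
    have herase : ∀ i ∈ Finset.univ.erase i0, d i = g r / r := by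
      intro i hi
      simp only [hd_def, if_neg (Finset.ne_of_mem_erase hi)]
    rw [Finset.prod_congr rfl herase, Finset.prod_const,
      Finset.card_erase_of_mem (Finset.mem_univ i0), Finset.card_univ, Fintype.card_fin]
    simp only [hd_def, if_pos rfl]
  -- minimum of u at the origin
  have hmin : ∀ z ∈ Metric.closedBall (0 : EuclideanSpace ℝ (Fin N)) 1, u 0 ≤ u z := by
    intro z hz
    have hz' : -z ∈ Metric.closedBall (0 : EuclideanSpace ℝ (Fin N)) 1 := by
      rwa [Metric.mem_closedBall, dist_zero_right, norm_neg, ← dist_zero_right]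
    have huz : u (-z) = u z := hrad _ _ (norm_neg z)
    have h2 := hconv.2 hz hz' (le_of_lt one_half_pos) (le_of_lt one_half_pos) (by norm_num)
    have h3 : (1/2 : ℝ) • z + (1/2 : ℝ) • (-z) = 0 := by
      rw [smul_neg]; abel
    rw [h3, huz] at h2
    simp only [smul_eq_mul] at h2
    linarith
  have hloc : IsLocalMin φ 0 := by
    have hIcc : Icc (-1:ℝ) 1 ∈ nhds (0:ℝ) := Icc_mem_nhds (by norm_num) (by norm_num)
    filter_upwards [hIcc] with r hr
    show φ 0 ≤ φ r
    have h0 : φ 0 = u 0 := by simp only [hφ_def, zero_smul]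
    rw [h0]
    exact hmin _ (hmemc r (abs_le.2 ⟨hr.1, hr.2⟩))
  have hg0 : g 0 = 0 := hloc.deriv_eq_zero
  -- convexity of φ, nonnegativity of g on (0,1)
  have hφconv : ConvexOn ℝ (Ioo (-1:ℝ) 1) φ := by
    have hA := hconv.comp_affineMap
      (LinearMap.toSpanSingleton ℝ (EuclideanSpace ℝ (Fin N)) e).toAffineMap
    have hcomp : (u ∘ ⇑(LinearMap.toSpanSingleton ℝ (EuclideanSpace ℝ (Fin N)) e).toAffineMap)
        = φ := by
      funext r; simp [LinearMap.toSpanSingleton_apply, hφ_def]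
    rw [hcomp] at hA
    refine hA.subset ?_ (convex_Ioo _ _)
    intro r hr
    show (LinearMap.toSpanSingleton ℝ (EuclideanSpace ℝ (Fin N)) e).toAffineMap r
      ∈ Metric.closedBall 0 1
    have : (LinearMap.toSpanSingleton ℝ (EuclideanSpace ℝ (Fin N)) e).toAffineMap r = r • e := by
      simp [LinearMap.toSpanSingleton_apply]
    rw [this]
    exact hmemc r (abs_le.2 ⟨le_of_lt hr.1, le_of_lt hr.2⟩)
  have hgmono : MonotoneOn g (Ioo (-1:ℝ) 1) :=
    hφconv.monotoneOn_deriv (fun x hx => (hφ2 x hx).differentiableAt (by norm_num))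
  have hgnn : ∀ s ∈ Ioo (0:ℝ) 1, 0 ≤ g s := by
    intro s hs
    have h := hgmono (show (0:ℝ) ∈ Ioo (-1:ℝ) 1 by norm_num)
      (⟨lt_trans (by norm_num) hs.1, hs.2⟩ : s ∈ Ioo (-1:ℝ) 1) hs.1.le
    rw [hg0] at h
    exact h
  -- the integrand
  set f : ℝ → ℝ := fun τ => (N:ℝ) * τ ^ (N - 1) * (-w (τ • e)) ^ γ with hf_def
  have hfc : ContinuousOn f (Icc (0:ℝ) 1) := by
    apply ContinuousOn.mul
    · exact (continuous_const.mul (continuous_pow _)).continuousOn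
    · apply ContinuousOn.rpow_const
      · apply ContinuousOn.neg
        apply hwc.comp (continuous_id.smul continuous_const).continuousOn
        intro τ hτ
        exact hmemc τ (abs_le.2 ⟨by linarith [hτ.1], hτ.2⟩)
      · intro τ _; exact Or.inr hγ.le
  -- FTC for g ^ N
  have hP : ∀ s ∈ Ioo (0:ℝ) 1, (g s) ^ N = ∫ τ in (0:ℝ)..s, f τ := by
    intro s hs
    have hsub : uIcc (0:ℝ) s ⊆ Icc (0:ℝ) 1 := by
      rw [uIcc_of_le hs.1.le]; exact Icc_subset_Icc le_rfl hs.2.le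
    have hint : IntervalIntegrable f volume 0 s := (hfc.mono hsub).intervalIntegrable
    have hderiv : ∀ τ ∈ uIcc (0:ℝ) s, HasDerivAt (fun r => (g r) ^ N) (f τ) τ := by
      intro τ hτ
      rw [uIcc_of_le hs.1.le] at hτ
      have hτIoo : τ ∈ Ioo (-1:ℝ) 1 := ⟨by linarith [hτ.1], lt_of_le_of_lt hτ.2 hs.2⟩
      have hbase := (hgd τ hτIoo).pow N
      refine hbase.congr_deriv ?_
      symm
      rcases eq_or_lt_of_le hτ.1 with rfl | hτpos
      · have h1 : (0:ℝ) ^ (N-1) = 0 := zero_pow (by omega)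
        simp only [hf_def, h1, hg0, mul_zero, zero_mul, mul_comm]
      · have hτ1 : τ < 1 := lt_of_le_of_lt hτ.2 hs.2
        have hτball : τ • e ∈ Metric.ball (0 : EuclideanSpace ℝ (Fin N)) 1 :=
          hmemb τ (abs_lt.2 ⟨by linarith, hτ1⟩)
        have hode : deriv g τ * (g τ / τ) ^ (N-1) = (-w (τ • e)) ^ γ := by
          rw [← heq _ hτball]
          exact (hdet τ ⟨hτpos, hτ1⟩).symm
        have hτne : τ ≠ 0 := ne_of_gt hτpos
        calc f τ = (N:ℝ) * τ ^ (N-1) * (deriv g τ * (g τ / τ) ^ (N-1)) := by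
              rw [hode, hf_def]
          _ = (N:ℝ) * g τ ^ (N-1) * deriv g τ := by
              rw [div_pow]
              field_simp
    have hsub2 := intervalIntegral.integral_eq_sub_of_hasDerivAt hderiv hint
    rw [hsub2, hg0, zero_pow hNne, sub_zero]
  -- conclusion
  intro t ht
  have hMA : MAop N γ (fun τ => -w (τ • e)) t
      = ∫ s in t..(1:ℝ), (∫ τ in (0:ℝ)..s, f τ) ^ ((N:ℝ)⁻¹) := rfl
  have hIc : ContinuousOn (fun s => ∫ τ in (0:ℝ)..s, f τ) (Icc (0:ℝ) 1) := by
    have h01 : uIcc (0:ℝ) 1 = Icc (0:ℝ) 1 := uIcc_of_le (by norm_num)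
    have := intervalIntegral.continuousOn_primitive_interval
      (μ := volume) (f := f) (a := 0) (b := 1) (by rw [h01]; exact hfc.integrableOn_Icc)
    rwa [h01] at this
  have hGc : ContinuousOn (fun s => (∫ τ in (0:ℝ)..s, f τ) ^ ((N:ℝ)⁻¹)) (Icc (0:ℝ) 1) :=
    hIc.rpow_const (fun x _ => Or.inr (by positivity))
  have hGint : IntervalIntegrable (fun s => (∫ τ in (0:ℝ)..s, f τ) ^ ((N:ℝ)⁻¹)) volume t 1 := by
    apply ContinuousOn.intervalIntegrable
    apply hGc.mono
    rw [uIcc_of_le ht.2]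
    exact Icc_subset_Icc ht.1 le_rfl
  have hφcont : ContinuousOn φ (Icc t 1) := by
    apply huc.comp (continuous_id.smul continuous_const).continuousOn
    intro r hr
    exact hmemc r (abs_le.2 ⟨by linarith [ht.1, hr.1], hr.2⟩)
  have hderiv : ∀ s ∈ Ioo t 1, HasDerivAt φ ((∫ τ in (0:ℝ)..s, f τ) ^ ((N:ℝ)⁻¹)) s := by
    intro s hsI
    have hs : s ∈ Ioo (0:ℝ) 1 := ⟨lt_of_le_of_lt ht.1 hsI.1, hsI.2⟩
    have hGs : (∫ τ in (0:ℝ)..s, f τ) ^ ((N:ℝ)⁻¹) = g s := by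
      rw [← hP s hs, Real.pow_rpow_inv_natCast (hgnn s hs) hNne]
    rw [hGs]
    exact hφd s ⟨lt_trans (by norm_num) hs.1, hs.2⟩
  have hFTC := intervalIntegral.integral_eq_sub_of_hasDerivAt_of_le ht.2 hφcont hderiv hGint
  have hφ1 : φ 1 = 0 := by
    have : φ 1 = u e := by simp only [hφ_def, one_smul]
    rw [this]
    apply hub
    rw [mem_sphere_zero_iff_norm]
    exact he
  rw [hMA, hFTC, hφ1, zero_sub]


theorem stmt6 (N : ℕ) (hN : 2 ≤ N) (α β : ℝ) (hα : 0 < α) (hβ : 0 < β)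
    (hαβ : α * β = (N:ℝ) ^ 2) :
    (¬ ∃ v : ℝ → ℝ, memK v ∧ (∃ t ∈ Icc (0:ℝ) 1, v t ≠ 0) ∧
        ∀ t ∈ Icc (0:ℝ) 1, MAop N α (MAop N β v) t = v t) ∧
    (¬ ∃ u₁ u₂ : EuclideanSpace ℝ (Fin N) → ℝ,
        ContDiffOn ℝ 2 u₁ (Metric.ball 0 1) ∧ ContDiffOn ℝ 2 u₂ (Metric.ball 0 1) ∧
        ContinuousOn u₁ (Metric.closedBall 0 1) ∧ ContinuousOn u₂ (Metric.closedBall 0 1) ∧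
        (∀ x y : EuclideanSpace ℝ (Fin N), ‖x‖ = ‖y‖ → u₁ x = u₁ y ∧ u₂ x = u₂ y) ∧
        ConvexOn ℝ (Metric.closedBall 0 1) u₁ ∧ ConvexOn ℝ (Metric.closedBall 0 1) u₂ ∧
        (∀ x ∈ Metric.ball (0 : EuclideanSpace ℝ (Fin N)) 1, u₁ x < 0 ∧ u₂ x < 0) ∧
        (∀ x ∈ Metric.sphere (0 : EuclideanSpace ℝ (Fin N)) 1, u₁ x = 0 ∧ u₂ x = 0) ∧
        (∀ x ∈ Metric.ball (0 : EuclideanSpace ℝ (Fin N)) 1,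
          hessDet u₁ x = (-u₂ x) ^ α ∧ hessDet u₂ x = (-u₁ x) ^ β)) := by
  constructor
  · rintro ⟨v, hK, hne, hfix⟩
    exact partA N hN α β hα hβ hαβ v hK.1 hK.2.1 hne hfix
  · rintro ⟨u₁, u₂, hu₁2, hu₂2, hu₁c, hu₂c, hrad, hc₁, hc₂, hneg, hzero, hhess⟩
    have hi0 : 0 < N := by omega
    have h1 := radial_MAop N hN α hα ⟨0, hi0⟩ u₁ u₂ hu₁2 hu₁c hu₂c
      (fun x y h => (hrad x y h).1) hc₁ (fun x hx => (hzero x hx).1)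
      (fun x hx => (hhess x hx).1)
    have h2 := radial_MAop N hN β hβ ⟨0, hi0⟩ u₂ u₁ hu₂2 hu₂c hu₁c
      (fun x y h => (hrad x y h).2) hc₂ (fun x hx => (hzero x hx).2)
      (fun x hx => (hhess x hx).2)
    have hnsmul : ∀ r : ℝ, ‖r • EuclideanSpace.single (⟨0, hi0⟩ : Fin N) (1:ℝ)‖ = |r| := by
      intro r
      rw [norm_smul]
      simp
    have hcont : ContinuousOn
        (fun t : ℝ => -u₁ (t • EuclideanSpace.single (⟨0, hi0⟩ : Fin N) (1:ℝ)))
        (Icc (0:ℝ) 1) := by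
      apply ContinuousOn.neg
      apply hu₁c.comp (continuous_id.smul continuous_const).continuousOn
      intro t ht
      show (t • EuclideanSpace.single (⟨0, hi0⟩ : Fin N) (1:ℝ)) ∈ Metric.closedBall 0 1
      rw [mem_closedBall_zero_iff, hnsmul]
      exact abs_le.2 ⟨by linarith [ht.1], ht.2⟩
    have hnn : ∀ t ∈ Icc (0:ℝ) 1,
        0 ≤ -u₁ (t • EuclideanSpace.single (⟨0, hi0⟩ : Fin N) (1:ℝ)) := by
      intro t ht
      rcases lt_or_eq_of_le ht.2 with h | h
      · have hb : t • EuclideanSpace.single (⟨0, hi0⟩ : Fin N) (1:ℝ)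
            ∈ Metric.ball (0 : EuclideanSpace ℝ (Fin N)) 1 := by
          rw [mem_ball_zero_iff, hnsmul]
          exact abs_lt.2 ⟨by linarith [ht.1], h⟩
        linarith [(hneg _ hb).1]
      · have hsph : t • EuclideanSpace.single (⟨0, hi0⟩ : Fin N) (1:ℝ)
            ∈ Metric.sphere (0 : EuclideanSpace ℝ (Fin N)) 1 := by
          rw [mem_sphere_zero_iff_norm, hnsmul, h, abs_one]
        rw [(hzero _ hsph).1]
        norm_num
    have hne0 : -u₁ ((0:ℝ) • EuclideanSpace.single (⟨0, hi0⟩ : Fin N) (1:ℝ)) ≠ 0 := by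
      rw [zero_smul]
      have hb : (0 : EuclideanSpace ℝ (Fin N)) ∈ Metric.ball (0 : EuclideanSpace ℝ (Fin N)) 1 := by
        simp
      have := (hneg _ hb).1
      intro hcontra
      nlinarith
    have hfix : ∀ t ∈ Icc (0:ℝ) 1,
        MAop N α (MAop N β (fun τ => -u₁ (τ • EuclideanSpace.single (⟨0, hi0⟩ : Fin N) (1:ℝ)))) t
          = -u₁ (t • EuclideanSpace.single (⟨0, hi0⟩ : Fin N) (1:ℝ)) := by
      intro t ht
      have hcongr : MAop N α
          (MAop N β (fun τ => -u₁ (τ • EuclideanSpace.single (⟨0, hi0⟩ : Fin N) (1:ℝ)))) t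
          = MAop N α (fun τ => -u₂ (τ • EuclideanSpace.single (⟨0, hi0⟩ : Fin N) (1:ℝ))) t := by
        show (∫ s in t..(1:ℝ), (∫ τ in (0:ℝ)..s, (N:ℝ) * τ ^ (N - 1) *
            (MAop N β (fun τ => -u₁ (τ • EuclideanSpace.single (⟨0, hi0⟩ : Fin N) (1:ℝ))) τ) ^ α)
              ^ ((N:ℝ)⁻¹))
          = ∫ s in t..(1:ℝ), (∫ τ in (0:ℝ)..s, (N:ℝ) * τ ^ (N - 1) *
            (-u₂ (τ • EuclideanSpace.single (⟨0, hi0⟩ : Fin N) (1:ℝ))) ^ α) ^ ((N:ℝ)⁻¹)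
        apply intervalIntegral.integral_congr
        intro s hs
        rw [uIcc_of_le ht.2] at hs
        have hs0 : (0:ℝ) ≤ s := le_trans ht.1 hs.1
        show (∫ τ in (0:ℝ)..s, (N:ℝ) * τ ^ (N - 1) *
            (MAop N β (fun τ => -u₁ (τ • EuclideanSpace.single (⟨0, hi0⟩ : Fin N) (1:ℝ))) τ) ^ α)
              ^ ((N:ℝ)⁻¹) = _
        congr 1
        apply intervalIntegral.integral_congr
        intro τ hτ
        rw [uIcc_of_le hs0] at hτ
        have hτ1 : τ ∈ Icc (0:ℝ) 1 := ⟨hτ.1, le_trans hτ.2 hs.2⟩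
        show (N:ℝ) * τ ^ (N - 1) *
            (MAop N β (fun τ => -u₁ (τ • EuclideanSpace.single (⟨0, hi0⟩ : Fin N) (1:ℝ))) τ) ^ α
          = _
        rw [h2 τ hτ1]
      rw [hcongr]
      exact h1 t ht
    exact partA N hN α β hα hβ hαβ
      (fun t => -u₁ (t • EuclideanSpace.single (⟨0, hi0⟩ : Fin N) (1:ℝ)))
      hcont hnn ⟨0, ⟨le_rfl, zero_le_one⟩, hne0⟩ hfix
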